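/- For complex q with 0 < |q| < 1, x with no factor vanishing, and any n ≥ 1, 1 ≤ h_1 < h_2 ranges give: ∑_{1 ≤ h_1 < h_2} (x q^{h_1}/(1+x q^{h_1}))(x q^{h_2}/(1+x q^{h_2})) = ∑_{1 ≤ k_1 < k_2} (-x)^{k_2} (q^{k_1}/(1-q^{k_1})) (q^{k_2}/(1-q^{k_2})). -/

import Mathlib

open Finset

noncomputable section
namespace CW

/-- Parametrize pairs `p.1 < p.2` by `(a, m) ↦ (a, a + m + 1)`. -/
def e : ℕ × ℕ ≃ {p : ℕ × ℕ // p.1 < p.2} where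
  toFun p := ⟨(p.1, p.1 + p.2 + 1), by omega⟩
  invFun p := (p.1.1, p.1.2 - p.1.1 - 1)
  left_inv p := by ext <;> simp <;> omega
  right_inv p := by
    obtain ⟨⟨a, b⟩, h⟩ := p
    simp only [Subtype.mk.injEq, Prod.mk.injEq]
    exact ⟨trivial, by omega⟩

lemma summable_geom_succ (z : ℂ) (hz : ‖z‖ < 1) : Summable (fun n : ℕ => z ^ (n + 1)) := by
  simpa [pow_succ, mul_comm] using (summable_geometric_of_norm_lt_one hz).mul_left z

lemma tsum_geom_succ (z : ℂ) (hz : ‖z‖ < 1) : ∑' n : ℕ, z ^ (n + 1) = z / (1 - z) := by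
  calc ∑' n : ℕ, z ^ (n + 1) = ∑' n : ℕ, z * z ^ n := by
        simp [pow_succ, mul_comm]
  _ = z * (1 - z)⁻¹ := by rw [tsum_mul_left, tsum_geometric_of_norm_lt_one hz]
  _ = z / (1 - z) := (div_eq_mul_inv _ _).symm

lemma summable_geom_succ_real (r : ℝ) (h0 : 0 ≤ r) (hr : r < 1) :
    Summable (fun n : ℕ => r ^ (n + 1)) := by
  simpa [pow_succ, mul_comm] using (summable_geometric_of_lt_one h0 hr).mul_left r

/-- Geometric expansion of `z/(1+z)`. -/
lemma expand (z : ℂ) (hz : ‖z‖ < 1) : z / (1 + z) = ∑' k : ℕ, -((-z) ^ (k + 1)) := by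
  rw [tsum_neg, tsum_geom_succ (-z) (by simpa using hz), neg_div, neg_neg, sub_neg_eq_add]

lemma summable_norm_expand (z : ℂ) (hz : ‖z‖ < 1) :
    Summable (fun k : ℕ => ‖-((-z) ^ (k + 1))‖) := by
  have : (fun k : ℕ => ‖-((-z) ^ (k + 1))‖) = fun k : ℕ => ‖z‖ ^ (k + 1) := by
    funext k; rw [norm_neg, norm_pow, norm_neg]
  rw [this]
  exact summable_geom_succ_real _ (norm_nonneg z) hz

end CW

set_option maxHeartbeats 1600000 in
/-- The coefficient-of-`w²` computation:
`∑_{1 ≤ h₁ < h₂} (xq^{h₁}/(1+xq^{h₁}))(xq^{h₂}/(1+xq^{h₂}))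
  = ∑_{1 ≤ k₁ < k₂} (-x)^{k₂} (q^{k₁}/(1-q^{k₁}))(q^{k₂}/(1-q^{k₂}))`
as absolutely convergent double series for `0 < |q| < 1`, `|x| < 1`.
Pairs `1 ≤ h₁ < h₂` are parametrized by `p : ℕ × ℕ` with `p.1 < p.2`
via `hⱼ = pⱼ + 1`. -/
theorem coeff_w_sq (q x : ℂ) (h0 : 0 < ‖q‖) (h1 : ‖q‖ < 1)
    (h2 : ‖x‖ < 1) (hx : ∀ h : ℕ, 1 + x * q ^ (h + 1) ≠ 0) :
    ∑' p : {p : ℕ × ℕ // p.1 < p.2},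
        (x * q ^ (p.1.1 + 1) / (1 + x * q ^ (p.1.1 + 1))) *
          (x * q ^ (p.1.2 + 1) / (1 + x * q ^ (p.1.2 + 1)))
      = ∑' p : {p : ℕ × ℕ // p.1 < p.2},
          (-x) ^ (p.1.2 + 1) * (q ^ (p.1.1 + 1) / (1 - q ^ (p.1.1 + 1))) *
            (q ^ (p.1.2 + 1) / (1 - q ^ (p.1.2 + 1))) := by
  have hq1 : ‖q‖ < 1 := by exact h1
  have hx1 : ‖x‖ < 1 := by exact h2
  have hqp : ∀ n : ℕ, 0 < n → ‖q ^ n‖ < 1 := by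
    intro n hn
    rw [norm_pow]
    exact pow_lt_one₀ (norm_nonneg _) hq1 hn.ne'
  have hzp : ∀ n : ℕ, 0 < n → ‖x * q ^ n‖ < 1 := by
    intro n hn
    rw [norm_mul]
    calc ‖x‖ * ‖q ^ n‖ ≤ 1 * ‖q ^ n‖ :=
          mul_le_mul_of_nonneg_right hx1.le (norm_nonneg _)
    _ = ‖q ^ n‖ := one_mul _
    _ < 1 := hqp n hn
  -- The full four-index term: index `((a, m), (k₁, k₂))`.
  set T : (ℕ × ℕ) × (ℕ × ℕ) → ℂ := fun p =>
    (-(-(x * q ^ (p.1.1 + 1))) ^ (p.2.1 + 1)) *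
      (-(-(x * q ^ (p.1.1 + p.1.2 + 2))) ^ (p.2.2 + 1)) with hTdef
  -- pointwise rewriting of `T`
  have hTval : ∀ a m k1 k2 : ℕ, T ((a, m), (k1, k2)) =
      ((-x) ^ (k1 + 1) * (-x) ^ (k2 + 1)) *
        ((q ^ (k1 + k2 + 2)) ^ (a + 1) * (q ^ (k2 + 1)) ^ (m + 1)) := by
    intro a m k1 k2
    simp only [hTdef]
    calc (-(-(x * q ^ (a + 1))) ^ (k1 + 1)) * (-(-(x * q ^ (a + m + 2))) ^ (k2 + 1))
        = ((-x) ^ (k1 + 1) * (q ^ (a + 1)) ^ (k1 + 1)) *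
            ((-x) ^ (k2 + 1) * (q ^ (a + m + 2)) ^ (k2 + 1)) := by
          rw [show -(x * q ^ (a + 1)) = (-x) * q ^ (a + 1) by ring,
            show -(x * q ^ (a + m + 2)) = (-x) * q ^ (a + m + 2) by ring,
            mul_pow, mul_pow]
          ring
      _ = ((-x) ^ (k1 + 1) * (-x) ^ (k2 + 1)) *
            (q ^ ((a + 1) * (k1 + 1)) * q ^ ((a + m + 2) * (k2 + 1))) := by
          rw [← pow_mul, ← pow_mul]; ring
      _ = ((-x) ^ (k1 + 1) * (-x) ^ (k2 + 1)) *
            (q ^ ((k1 + k2 + 2) * (a + 1)) * q ^ ((k2 + 1) * (m + 1))) := by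
          rw [← pow_add, ← pow_add]
          congr 1
          ring
      _ = ((-x) ^ (k1 + 1) * (-x) ^ (k2 + 1)) *
            ((q ^ (k1 + k2 + 2)) ^ (a + 1) * (q ^ (k2 + 1)) ^ (m + 1)) := by
          rw [pow_mul, pow_mul]
  -- summability of `T`
  have hTnorm : ∀ p : (ℕ × ℕ) × (ℕ × ℕ), ‖T p‖ ≤
      (‖q‖ ^ (p.1.1 + 1) * ‖q‖ ^ (p.1.2 + 1)) * (‖x‖ ^ (p.2.1 + 1) * ‖x‖ ^ (p.2.2 + 1)) := by
    rintro ⟨⟨a, m⟩, k1, k2⟩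
    have hv : ‖T ((a, m), (k1, k2))‖ =
        (‖x‖ ^ (k1 + 1) * ‖q‖ ^ ((a + 1) * (k1 + 1))) *
          (‖x‖ ^ (k2 + 1) * ‖q‖ ^ ((a + m + 2) * (k2 + 1))) := by
      simp only [hTdef, norm_mul, norm_neg, norm_pow, mul_pow, ← pow_mul]
    rw [hv]
    have pq1 : ‖q‖ ^ ((a + 1) * (k1 + 1)) ≤ ‖q‖ ^ (a + 1) :=
      pow_le_pow_of_le_one (norm_nonneg _) hq1.le
        (by calc a + 1 = (a + 1) * 1 := (mul_one _).symm
          _ ≤ (a + 1) * (k1 + 1) := Nat.mul_le_mul_left _ (by omega))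
    have pq2 : ‖q‖ ^ ((a + m + 2) * (k2 + 1)) ≤ ‖q‖ ^ (m + 1) :=
      pow_le_pow_of_le_one (norm_nonneg _) hq1.le
        (by calc m + 1 ≤ (a + m + 2) * 1 := by omega
          _ ≤ (a + m + 2) * (k2 + 1) := Nat.mul_le_mul_left _ (by omega))
    calc (‖x‖ ^ (k1 + 1) * ‖q‖ ^ ((a + 1) * (k1 + 1))) *
          (‖x‖ ^ (k2 + 1) * ‖q‖ ^ ((a + m + 2) * (k2 + 1)))
        = (‖q‖ ^ ((a + 1) * (k1 + 1)) * ‖q‖ ^ ((a + m + 2) * (k2 + 1))) *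
            (‖x‖ ^ (k1 + 1) * ‖x‖ ^ (k2 + 1)) := by ring
      _ ≤ (‖q‖ ^ (a + 1) * ‖q‖ ^ (m + 1)) * (‖x‖ ^ (k1 + 1) * ‖x‖ ^ (k2 + 1)) := by
          apply mul_le_mul_of_nonneg_right _
            (mul_nonneg (pow_nonneg (norm_nonneg _) _) (pow_nonneg (norm_nonneg _) _))
          exact mul_le_mul pq1 pq2 (pow_nonneg (norm_nonneg _) _) (pow_nonneg (norm_nonneg _) _)
  have hgq : Summable (fun n : ℕ => ‖q‖ ^ (n + 1)) :=
    CW.summable_geom_succ_real _ (norm_nonneg q) hq1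
  have hgx : Summable (fun n : ℕ => ‖x‖ ^ (n + 1)) :=
    CW.summable_geom_succ_real _ (norm_nonneg x) hx1
  have hBq : Summable (fun p : ℕ × ℕ => ‖q‖ ^ (p.1 + 1) * ‖q‖ ^ (p.2 + 1)) :=
    hgq.mul_of_nonneg hgq (fun n => pow_nonneg (norm_nonneg _) _)
      (fun n => pow_nonneg (norm_nonneg _) _)
  have hBx : Summable (fun p : ℕ × ℕ => ‖x‖ ^ (p.1 + 1) * ‖x‖ ^ (p.2 + 1)) :=
    hgx.mul_of_nonneg hgx (fun n => pow_nonneg (norm_nonneg _) _)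
      (fun n => pow_nonneg (norm_nonneg _) _)
  have hB : Summable (fun p : (ℕ × ℕ) × (ℕ × ℕ) =>
      (‖q‖ ^ (p.1.1 + 1) * ‖q‖ ^ (p.1.2 + 1)) * (‖x‖ ^ (p.2.1 + 1) * ‖x‖ ^ (p.2.2 + 1))) :=
    hBq.mul_of_nonneg hBx
      (fun p => mul_nonneg (pow_nonneg (norm_nonneg _) _) (pow_nonneg (norm_nonneg _) _))
      (fun p => mul_nonneg (pow_nonneg (norm_nonneg _) _) (pow_nonneg (norm_nonneg _) _))
  have hTsum : Summable T := Summable.of_norm_bounded hB hTnorm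
  -- left-hand side
  calc ∑' p : {p : ℕ × ℕ // p.1 < p.2},
        (x * q ^ (p.1.1 + 1) / (1 + x * q ^ (p.1.1 + 1))) *
          (x * q ^ (p.1.2 + 1) / (1 + x * q ^ (p.1.2 + 1)))
      = ∑' p : ℕ × ℕ,
          (x * q ^ (p.1 + 1) / (1 + x * q ^ (p.1 + 1))) *
            (x * q ^ (p.1 + p.2 + 2) / (1 + x * q ^ (p.1 + p.2 + 2))) := by
        rw [← CW.e.tsum_eq]
        apply tsum_congr
        intro p
        simp only [CW.e, Equiv.coe_fn_mk]
    _ = ∑' p : ℕ × ℕ, ∑' kk : ℕ × ℕ, T (p, kk) := by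
        apply tsum_congr
        rintro ⟨a, m⟩
        have e1 : x * q ^ (a + 1) / (1 + x * q ^ (a + 1)) =
            ∑' k : ℕ, -((-(x * q ^ (a + 1))) ^ (k + 1)) :=
          CW.expand _ (hzp (a + 1) (by omega))
        have e2 : x * q ^ (a + m + 2) / (1 + x * q ^ (a + m + 2)) =
            ∑' k : ℕ, -((-(x * q ^ (a + m + 2))) ^ (k + 1)) :=
          CW.expand _ (hzp (a + m + 2) (by omega))
        rw [e1, e2, tsum_mul_tsum_of_summable_norm
          (CW.summable_norm_expand _ (hzp (a + 1) (by omega)))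
          (CW.summable_norm_expand _ (hzp (a + m + 2) (by omega)))]
    _ = ∑' p : (ℕ × ℕ) × (ℕ × ℕ), T p := (Summable.tsum_prod hTsum).symm
    _ = ∑' p : (ℕ × ℕ) × (ℕ × ℕ), T p.swap := by
        rw [← (Equiv.prodComm (ℕ × ℕ) (ℕ × ℕ)).tsum_eq (fun p => T p)]
        rfl
    _ = ∑' kk : ℕ × ℕ, ∑' am : ℕ × ℕ, T (am, kk) := Summable.tsum_prod hTsum.prod_symm
    _ = ∑' kk : ℕ × ℕ,
          ((-x) ^ (kk.1 + 1) * (-x) ^ (kk.2 + 1)) *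
            ((q ^ (kk.1 + kk.2 + 2) / (1 - q ^ (kk.1 + kk.2 + 2))) *
              (q ^ (kk.2 + 1) / (1 - q ^ (kk.2 + 1)))) := by
        apply tsum_congr
        rintro ⟨k1, k2⟩
        have hU : ‖q ^ (k1 + k2 + 2)‖ < 1 := hqp _ (by omega)
        have hV : ‖q ^ (k2 + 1)‖ < 1 := hqp _ (by omega)
        have hnu : Summable (fun a : ℕ => ‖(q ^ (k1 + k2 + 2)) ^ (a + 1)‖) := by
          have : (fun a : ℕ => ‖(q ^ (k1 + k2 + 2)) ^ (a + 1)‖) =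
              fun a : ℕ => ‖q ^ (k1 + k2 + 2)‖ ^ (a + 1) := by
            funext a; rw [norm_pow]
          rw [this]; exact CW.summable_geom_succ_real _ (norm_nonneg _) hU
        have hnv : Summable (fun m : ℕ => ‖(q ^ (k2 + 1)) ^ (m + 1)‖) := by
          have : (fun m : ℕ => ‖(q ^ (k2 + 1)) ^ (m + 1)‖) =
              fun m : ℕ => ‖q ^ (k2 + 1)‖ ^ (m + 1) := by
            funext m; rw [norm_pow]
          rw [this]; exact CW.summable_geom_succ_real _ (norm_nonneg _) hV
        calc ∑' am : ℕ × ℕ, T (am, (k1, k2))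
            = ∑' am : ℕ × ℕ, ((-x) ^ (k1 + 1) * (-x) ^ (k2 + 1)) *
                ((q ^ (k1 + k2 + 2)) ^ (am.1 + 1) * (q ^ (k2 + 1)) ^ (am.2 + 1)) := by
              apply tsum_congr; rintro ⟨a, m⟩; exact hTval a m k1 k2
          _ = ((-x) ^ (k1 + 1) * (-x) ^ (k2 + 1)) *
                ∑' am : ℕ × ℕ, (q ^ (k1 + k2 + 2)) ^ (am.1 + 1) * (q ^ (k2 + 1)) ^ (am.2 + 1) :=
              tsum_mul_left
          _ = ((-x) ^ (k1 + 1) * (-x) ^ (k2 + 1)) *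
                ((∑' a : ℕ, (q ^ (k1 + k2 + 2)) ^ (a + 1)) *
                  (∑' m : ℕ, (q ^ (k2 + 1)) ^ (m + 1))) := by
              rw [tsum_mul_tsum_of_summable_norm hnu hnv]
          _ = ((-x) ^ (k1 + 1) * (-x) ^ (k2 + 1)) *
                ((q ^ (k1 + k2 + 2) / (1 - q ^ (k1 + k2 + 2))) *
                  (q ^ (k2 + 1) / (1 - q ^ (k2 + 1)))) := by
              rw [CW.tsum_geom_succ _ hU, CW.tsum_geom_succ _ hV]
    _ = ∑' p : {p : ℕ × ℕ // p.1 < p.2},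
          (-x) ^ (p.1.2 + 1) * (q ^ (p.1.1 + 1) / (1 - q ^ (p.1.1 + 1))) *
            (q ^ (p.1.2 + 1) / (1 - q ^ (p.1.2 + 1))) := by
        rw [← CW.e.tsum_eq, ← (Equiv.prodComm ℕ ℕ).tsum_eq]
        apply tsum_congr
        rintro ⟨k1, k2⟩
        simp only [CW.e, Equiv.coe_fn_mk, Equiv.prodComm_apply, Prod.swap_prod_mk]
        have h21 : k2 + k1 + 2 = k1 + k2 + 2 := by ring
        rw [h21, show k1 + k2 + 1 + 1 = k1 + k2 + 2 by omega]
        have hpw : (-x) ^ (k2 + 1) * (-x) ^ (k1 + 1) = (-x) ^ (k1 + k2 + 2) := by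
          rw [← pow_add]; congr 1; omega
        rw [hpw]; ring
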